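/- Let g ∈ SL₂(ℝ) be diagonalizable over ℝ with distinct eigenvalues of modulus ≠ 1, with eigendirections v̄₁, v̄₂ ∈ P(ℝ²), and let s ∈ SL₂(ℝ) satisfy s·v̄ᵢ ∉ {v̄₁, v̄₂} for i = 1, 2. Then for every v̄ ∈ P(ℝ²), the orbit of v̄ under the group generated by g and s is infinite. -/

import Mathlib

/-- If `g ∈ SL₂(ℝ)` is ℝ-diagonalizable with distinct eigenvalues of modulus `≠ 1`
and `s ∈ SL₂(ℝ)` maps neither eigendirection into the set of eigendirections,
then every orbit on the projective line under the group generated by `g` and `s`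
is infinite. -/
theorem projective_orbit_infinite_of_hyperbolic_and_scattering
    (g s : (Matrix (Fin 2) (Fin 2) ℝ)ˣ)
    (hgdet : (g : Matrix (Fin 2) (Fin 2) ℝ).det = 1)
    (hsdet : (s : Matrix (Fin 2) (Fin 2) ℝ).det = 1)
    (lam₁ lam₂ : ℝ) (hne : lam₁ ≠ lam₂) (h₁ : |lam₁| ≠ 1) (h₂ : |lam₂| ≠ 1)
    (v₁ v₂ : Fin 2 → ℝ) (hv₁ : v₁ ≠ 0) (hv₂ : v₂ ≠ 0)
    (heig₁ : (g : Matrix (Fin 2) (Fin 2) ℝ).mulVec v₁ = lam₁ • v₁)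
    (heig₂ : (g : Matrix (Fin 2) (Fin 2) ℝ).mulVec v₂ = lam₂ • v₂)
    (hs₁₁ : ¬ ∃ c : ℝ, (s : Matrix (Fin 2) (Fin 2) ℝ).mulVec v₁ = c • v₁)
    (hs₁₂ : ¬ ∃ c : ℝ, (s : Matrix (Fin 2) (Fin 2) ℝ).mulVec v₁ = c • v₂)
    (hs₂₁ : ¬ ∃ c : ℝ, (s : Matrix (Fin 2) (Fin 2) ℝ).mulVec v₂ = c • v₁)
    (hs₂₂ : ¬ ∃ c : ℝ, (s : Matrix (Fin 2) (Fin 2) ℝ).mulVec v₂ = c • v₂) :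
    ∀ v : Fin 2 → ℝ, v ≠ 0 →
      Set.Infinite {p : Projectivization ℝ (Fin 2 → ℝ) |
        ∃ M ∈ Subgroup.closure ({g, s} : Set (Matrix (Fin 2) (Fin 2) ℝ)ˣ),
          ∃ h : ((M : Matrix (Fin 2) (Fin 2) ℝ)).mulVec v ≠ 0,
            p = Projectivization.mk ℝ (((M : Matrix (Fin 2) (Fin 2) ℝ)).mulVec v) h} := by
  intro v hv
  set G := (g : Matrix (Fin 2) (Fin 2) ℝ) with hG
  set S := (s : Matrix (Fin 2) (Fin 2) ℝ) with hS
  -- linear independence of v₁, v₂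
  have indep : ∀ a b : ℝ, a • v₁ + b • v₂ = 0 → a = 0 ∧ b = 0 := by
    intro a b hab
    have h1 : (a * lam₁) • v₁ + (b * lam₂) • v₂ = 0 := by
      have := congrArg G.mulVec hab
      rwa [Matrix.mulVec_add, Matrix.mulVec_smul, Matrix.mulVec_smul, heig₁, heig₂,
        Matrix.mulVec_zero, smul_smul, smul_smul] at this
    have h2 : (a * lam₂) • v₁ + (b * lam₂) • v₂ = 0 := by
      have := congrArg (fun w => lam₂ • w) hab
      simpa [smul_add, smul_smul, mul_comm] using this
    have h3 : (a * (lam₁ - lam₂)) • v₁ = 0 := by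
      have : (a * (lam₁ - lam₂)) • v₁ =
          ((a * lam₁) • v₁ + (b * lam₂) • v₂) - ((a * lam₂) • v₁ + (b * lam₂) • v₂) := by
        module
      rw [this, h1, h2, sub_zero]
    have ha : a = 0 := by
      rcases smul_eq_zero.mp h3 with h | h
      · rcases mul_eq_zero.mp h with h | h
        · exact h
        · exact absurd (sub_eq_zero.mp (by linarith)) hne
      · exact absurd h hv₁
    refine ⟨ha, ?_⟩
    rw [ha, zero_smul, zero_add] at hab
    rcases smul_eq_zero.mp hab with h | h
    · exact h
    · exact absurd h hv₂
  have coeff_eq : ∀ a b a' b' : ℝ, a • v₁ + b • v₂ = a' • v₁ + b' • v₂ → a = a' ∧ b = b' := by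
    intro a b a' b' h
    have h0 : (a - a') • v₁ + (b - b') • v₂ = 0 := by
      have : (a - a') • v₁ + (b - b') • v₂ =
          (a • v₁ + b • v₂) - (a' • v₁ + b' • v₂) := by module
      rw [this, h, sub_self]
    obtain ⟨e1, e2⟩ := indep _ _ h0
    exact ⟨sub_eq_zero.mp e1, sub_eq_zero.mp e2⟩
  have hli : LinearIndependent ℝ ![v₁, v₂] := LinearIndependent.pair_iff.mpr indep
  have hcard : Fintype.card (Fin 2) = Module.finrank ℝ (Fin 2 → ℝ) := by
    simp [Module.finrank_fin_fun]
  set B := basisOfLinearIndependentOfCardEqFinrank hli hcard with hBdef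
  have hB : ⇑B = ![v₁, v₂] := coe_basisOfLinearIndependentOfCardEqFinrank hli hcard
  have hB0 : B 0 = v₁ := by rw [hB]; rfl
  have hB1 : B 1 = v₂ := by rw [hB]; rfl
  -- determinant : lam₁ * lam₂ = 1
  have hdet : lam₁ * lam₂ = 1 := by
    have h := LinearMap.det_toMatrix B (Matrix.toLin' G)
    rw [LinearMap.det_toLin', hgdet] at h
    rw [Matrix.det_fin_two] at h
    have e00 : (LinearMap.toMatrix B B (Matrix.toLin' G)) 0 0 = lam₁ := by
      rw [LinearMap.toMatrix_apply, Matrix.toLin'_apply, hB0, heig₁, ← hB0, map_smul,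
        B.repr_self]
      simp
    have e10 : (LinearMap.toMatrix B B (Matrix.toLin' G)) 1 0 = 0 := by
      rw [LinearMap.toMatrix_apply, Matrix.toLin'_apply, hB0, heig₁, ← hB0, map_smul,
        B.repr_self]
      simp
    have e01 : (LinearMap.toMatrix B B (Matrix.toLin' G)) 0 1 = 0 := by
      rw [LinearMap.toMatrix_apply, Matrix.toLin'_apply, hB1, heig₂, ← hB1, map_smul,
        B.repr_self]
      simp
    have e11 : (LinearMap.toMatrix B B (Matrix.toLin' G)) 1 1 = lam₂ := by
      rw [LinearMap.toMatrix_apply, Matrix.toLin'_apply, hB1, heig₂, ← hB1, map_smul,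
        B.repr_self]
      simp
    rw [e00, e11, e01, e10] at h
    linarith
  have hl₁ : lam₁ ≠ 0 := by intro h; rw [h, zero_mul] at hdet; exact one_ne_zero hdet.symm
  have hl₂ : lam₂ ≠ 0 := by intro h; rw [h, mul_zero] at hdet; exact one_ne_zero hdet.symm
  -- exponent injectivity
  have habs : ∀ n m : ℕ, lam₁ ^ n * lam₂ ^ m = lam₁ ^ m * lam₂ ^ n → n = m := by
    intro n m h
    have ht0 : 0 < |lam₁| := abs_pos.mpr hl₁
    have hinv : |lam₂| = |lam₁|⁻¹ := by
      have : |lam₁| * |lam₂| = 1 := by rw [← abs_mul, hdet, abs_one]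
      field_simp
      linarith [this]
    have h2 : |lam₁| ^ n * |lam₂| ^ m = |lam₁| ^ m * |lam₂| ^ n := by
      rw [← abs_pow, ← abs_pow, ← abs_pow, ← abs_pow, ← abs_mul, ← abs_mul, h]
    rw [hinv, inv_pow, inv_pow] at h2
    have h3 : |lam₁| ^ n * |lam₁| ^ n = |lam₁| ^ m * |lam₁| ^ m := by
      field_simp at h2
      linarith [h2]
    rw [← pow_add, ← pow_add] at h3
    have key : ∀ k l : ℕ, k < l → |lam₁| ^ k ≠ |lam₁| ^ l := by
      intro k l hkl
      rcases lt_or_gt_of_ne h₁ with hlt | hgt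
      · exact fun e => absurd e.symm (ne_of_lt (pow_lt_pow_right_of_lt_one₀ ht0 hlt hkl))
      · exact ne_of_lt (pow_lt_pow_right₀ hgt hkl)
    rcases Nat.lt_trichotomy n m with hc | hc | hc
    · exact absurd h3 (key (n + n) (m + m) (by omega))
    · exact hc
    · exact absurd h3.symm (key (m + m) (n + n) (by omega))
  -- powers on eigenvectors
  have hpow : ∀ (lam : ℝ) (w : Fin 2 → ℝ), G.mulVec w = lam • w →
      ∀ n : ℕ, (G ^ n).mulVec w = lam ^ n • w := by
    intro lam w hw n
    induction n with
    | zero => simp [Matrix.one_mulVec]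
    | succ n ih =>
      rw [pow_succ, ← Matrix.mulVec_mulVec, hw, Matrix.mulVec_smul, ih, smul_smul, pow_succ,
        mul_comm]
  -- the master lemma
  have master : ∀ M₀ : (Matrix (Fin 2) (Fin 2) ℝ)ˣ,
      M₀ ∈ Subgroup.closure ({g, s} : Set (Matrix (Fin 2) (Fin 2) ℝ)ˣ) →
      ∀ A C : ℝ, A ≠ 0 → C ≠ 0 →
      (M₀ : Matrix (Fin 2) (Fin 2) ℝ).mulVec v = A • v₁ + C • v₂ →
      Set.Infinite {p : Projectivization ℝ (Fin 2 → ℝ) |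
        ∃ M ∈ Subgroup.closure ({g, s} : Set (Matrix (Fin 2) (Fin 2) ℝ)ˣ),
          ∃ h : ((M : Matrix (Fin 2) (Fin 2) ℝ)).mulVec v ≠ 0,
            p = Projectivization.mk ℝ (((M : Matrix (Fin 2) (Fin 2) ℝ)).mulVec v) h} := by
    intro M₀ hM₀ A C hA hC hrep
    have hval : ∀ n : ℕ, ((↑(g ^ n * M₀) : Matrix (Fin 2) (Fin 2) ℝ)).mulVec v
        = (A * lam₁ ^ n) • v₁ + (C * lam₂ ^ n) • v₂ := by
      intro n
      rw [Units.val_mul, Units.val_pow_eq_pow_val, ← Matrix.mulVec_mulVec, hrep,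
        Matrix.mulVec_add, Matrix.mulVec_smul, Matrix.mulVec_smul,
        hpow lam₁ v₁ heig₁ n, hpow lam₂ v₂ heig₂ n, smul_smul, smul_smul]
    have hnz : ∀ n : ℕ, ((↑(g ^ n * M₀) : Matrix (Fin 2) (Fin 2) ℝ)).mulVec v ≠ 0 := by
      intro n h0
      rw [hval n] at h0
      obtain ⟨e1, _⟩ := indep _ _ h0
      rcases mul_eq_zero.mp e1 with h | h
      · exact hA h
      · exact pow_ne_zero n hl₁ h
    apply Set.infinite_of_injective_forall_mem
      (f := fun n : ℕ => Projectivization.mk ℝ _ (hnz n))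
    case hi =>
      intro n m hmk
      rw [Projectivization.mk_eq_mk_iff] at hmk
      obtain ⟨c, hc⟩ := hmk
      rw [hval n, hval m, Units.smul_def] at hc
      have hc' : ((c : ℝ) * (A * lam₁ ^ m)) • v₁ + ((c : ℝ) * (C * lam₂ ^ m)) • v₂
          = (A * lam₁ ^ n) • v₁ + (C * lam₂ ^ n) • v₂ := by
        rw [← hc]; module
      obtain ⟨e1, e2⟩ := coeff_eq _ _ _ _ hc'
      have f1 : (c : ℝ) * lam₁ ^ m = lam₁ ^ n := by
        apply mul_left_cancel₀ hA
        rw [← e1]; ring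
      have f2 : (c : ℝ) * lam₂ ^ m = lam₂ ^ n := by
        apply mul_left_cancel₀ hC
        rw [← e2]; ring
      apply habs
      rw [← f1, ← f2]; ring
    case hf =>
      intro n
      exact ⟨g ^ n * M₀,
        Subgroup.mul_mem _ (Subgroup.pow_mem _ (Subgroup.subset_closure (by simp)) n) hM₀,
        hnz n, rfl⟩
  -- decompose v in the basis
  have repr_eq : ∀ w : Fin 2 → ℝ, w = (B.repr w 0) • v₁ + (B.repr w 1) • v₂ := by
    intro w
    have h := B.sum_repr w
    rw [Fin.sum_univ_two, hB0, hB1] at h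
    exact h.symm
  by_cases hA0 : B.repr v 0 = 0
  · -- v proportional to v₂
    have hC0 : B.repr v 1 ≠ 0 := by
      intro h0
      apply hv
      conv_lhs => rw [repr_eq v]
      rw [hA0, h0, zero_smul, zero_smul, add_zero]
    have hveq : v = (B.repr v 1) • v₂ := by
      conv_lhs => rw [repr_eq v]
      rw [hA0, zero_smul, zero_add]
    have hSv₂ : S.mulVec v₂ = (B.repr (S.mulVec v₂) 0) • v₁ + (B.repr (S.mulVec v₂) 1) • v₂ :=
      repr_eq _
    have hA'0 : B.repr (S.mulVec v₂) 0 ≠ 0 := by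
      intro h0
      apply hs₂₂
      refine ⟨B.repr (S.mulVec v₂) 1, ?_⟩
      conv_lhs => rw [hSv₂]
      rw [h0, zero_smul, zero_add]
    have hC'0 : B.repr (S.mulVec v₂) 1 ≠ 0 := by
      intro h0
      apply hs₂₁
      refine ⟨B.repr (S.mulVec v₂) 0, ?_⟩
      conv_lhs => rw [hSv₂]
      rw [h0, zero_smul, add_zero]
    refine master s (Subgroup.subset_closure (by simp)) _ _
      (mul_ne_zero hC0 hA'0) (mul_ne_zero hC0 hC'0) ?_
    conv_lhs => rw [hveq, Matrix.mulVec_smul, hSv₂]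
    rw [smul_add, smul_smul, smul_smul]
  · by_cases hC0 : B.repr v 1 = 0
    · -- v proportional to v₁
      have hveq : v = (B.repr v 0) • v₁ := by
        conv_lhs => rw [repr_eq v]
        rw [hC0, zero_smul, add_zero]
      have hSv₁ : S.mulVec v₁ = (B.repr (S.mulVec v₁) 0) • v₁ + (B.repr (S.mulVec v₁) 1) • v₂ :=
        repr_eq _
      have hA'0 : B.repr (S.mulVec v₁) 0 ≠ 0 := by
        intro h0
        apply hs₁₂
        refine ⟨B.repr (S.mulVec v₁) 1, ?_⟩
        conv_lhs => rw [hSv₁]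
        rw [h0, zero_smul, zero_add]
      have hC'0 : B.repr (S.mulVec v₁) 1 ≠ 0 := by
        intro h0
        apply hs₁₁
        refine ⟨B.repr (S.mulVec v₁) 0, ?_⟩
        conv_lhs => rw [hSv₁]
        rw [h0, zero_smul, add_zero]
      refine master s (Subgroup.subset_closure (by simp)) _ _
        (mul_ne_zero hA0 hA'0) (mul_ne_zero hA0 hC'0) ?_
      conv_lhs => rw [hveq, Matrix.mulVec_smul, hSv₁]
      rw [smul_add, smul_smul, smul_smul]
    · exact master 1 (one_mem _) _ _ hA0 hC0
        (by rw [Units.val_one, Matrix.one_mulVec]; exact repr_eq v)
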